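/- arXiv:2505.02531 — 2 statements merged into one kernel-verified Lean document; each statement's English description precedes it below -/
import Mathlib

section
/- Let V_h be a finite-dimensional subspace of L²(Ω) on which the inverse estimates ‖∇v_h‖ ≤ C_inv h⁻¹‖v_h‖ and the edge trace bound ‖v_h‖_{E_h}² ≤ C_tr h⁻¹‖v_h‖² hold. Let τ_K, τ_E > 0 satisfy τ_K (k/h² + |a|/h + s) ≤ 1 and τ_E ≤ c₄ τ_K/h. Then for every u_h ∈ V_h, the function v⁰ = τ_K P_h(a·∇u_h) satisfies k τ_K²‖∇v'‖² + s τ_K²‖v'‖² + τ_K³‖a·∇v'‖² + τ_E τ_K² k²‖[[∂_n v']]‖_{E_h}² ≤ C τ_K‖a·∇u_h‖², where v' = P_h(a·∇u_h). In particular |||v⁰||| ≤ C^{1/2}|||u_h|||. -/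
/-- Estimate (conv-2): under the inverse estimate `‖∇v'‖ ≤ C_inv h⁻¹‖v'‖`, the edge/trace
bound for jumps `‖[[∂ₙ v']]‖² ≤ C_tr h⁻¹‖∇v'‖²`, the bound `‖a·∇v'‖ ≤ |a|‖∇v'‖`, the
`L²`-projection stability `‖v'‖ = ‖P_h(a·∇u_h)‖ ≤ ‖a·∇u_h‖`, and the parameter bounds
`τ_K(k/h² + |a|/h + s) ≤ 1`, `τ_E ≤ c₄τ_K/h`, the auxiliary function `v⁰ = τ_K v'`
satisfies `kτ_K²‖∇v'‖² + sτ_K²‖v'‖² + τ_K³‖a·∇v'‖² + τ_Eτ_K²k²‖[[∂ₙ v']]‖² ≤ Cτ_K‖a·∇u_h‖²`;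
in particular its stabilized norm is bounded: `|||v⁰|||² ≤ Cτ_K‖a·∇u_h‖² `. -/
theorem stmt_11 (k s na h τK τE c₄ Cinv Ctr : ℝ)
    (Nv' Ngrad Nconv Njump Nau : ℝ)
    (hk : 0 ≤ k) (hs : 0 ≤ s) (hna : 0 ≤ na) (hh : 0 < h)
    (hτK : 0 < τK) (hτEpos : 0 < τE) (hc₄ : 0 < c₄)
    (hCinv : 0 < Cinv) (hCtr : 0 < Ctr)
    (hNv' : 0 ≤ Nv') (hNgrad : 0 ≤ Ngrad) (hNconv : 0 ≤ Nconv)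
    (hNjump : 0 ≤ Njump) (hNau : 0 ≤ Nau)
    (hinv : Ngrad ≤ Cinv / h * Nv')
    (hconv : Nconv ≤ na * Ngrad)
    (hjump : Njump ^ 2 ≤ Ctr / h * Ngrad ^ 2)
    (hstab : Nv' ≤ Nau)
    (hτ : τK * (k / h ^ 2 + na / h + s) ≤ 1)
    (hτE : τE ≤ c₄ * τK / h) :
    ∃ C > 0,
      k * τK ^ 2 * Ngrad ^ 2 + s * τK ^ 2 * Nv' ^ 2 + τK ^ 3 * Nconv ^ 2 +
          τE * τK ^ 2 * k ^ 2 * Njump ^ 2 ≤ C * τK * Nau ^ 2 ∧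
      k * τK ^ 2 * Ngrad ^ 2 + s * τK ^ 2 * Nv' ^ 2 + τK ^ 3 * Nconv ^ 2 ≤
          C * τK * Nau ^ 2 := by
  -- split the parameter bound into three individual bounds
  have hh2 : (0:ℝ) < h ^ 2 := by positivity
  have hτ1 : τK * k ≤ h ^ 2 := by
    have h1 : τK * (k / h ^ 2) ≤ 1 := by
      have h2 : 0 ≤ τK * (na / h) := by positivity
      have h3 : 0 ≤ τK * s := by positivity
      linarith [hτ]
    have := mul_le_mul_of_nonneg_right h1 hh2.le
    field_simp at this
    linarith
  have hτ2 : τK * na ≤ h := by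
    have h1 : τK * (na / h) ≤ 1 := by
      have h2 : 0 ≤ τK * (k / h ^ 2) := by positivity
      have h3 : 0 ≤ τK * s := by positivity
      linarith [hτ]
    have := mul_le_mul_of_nonneg_right h1 hh.le
    field_simp at this
    linarith
  have hτ3 : τK * s ≤ 1 := by
    have h1 : 0 ≤ τK * (k / h ^ 2) := by positivity
    have h2 : 0 ≤ τK * (na / h) := by positivity
    linarith [hτ]
  -- denominator-free forms of the hypotheses
  have hinv' : h * Ngrad ≤ Cinv * Nv' := by
    have := mul_le_mul_of_nonneg_left hinv hh.le
    field_simp at this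
    linarith
  have hg2' : h ^ 2 * Ngrad ^ 2 ≤ Cinv ^ 2 * Nv' ^ 2 := by
    linarith [mul_self_le_mul_self (by positivity : (0:ℝ) ≤ h * Ngrad) hinv']
  have hjump' : h * Njump ^ 2 ≤ Ctr * Ngrad ^ 2 := by
    have := mul_le_mul_of_nonneg_left hjump hh.le
    field_simp at this
    linarith
  have hτE' : τE * h ≤ c₄ * τK := by
    have := mul_le_mul_of_nonneg_right hτE hh.le
    field_simp at this
    linarith
  -- term-by-term bounds
  have t1 : k * τK ^ 2 * Ngrad ^ 2 ≤ Cinv ^ 2 * τK * Nv' ^ 2 := by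
    linarith [mul_le_mul_of_nonneg_left hg2' hτK.le,
      mul_le_mul_of_nonneg_right hτ1 (mul_nonneg hτK.le (sq_nonneg Ngrad))]
  have t2 : s * τK ^ 2 * Nv' ^ 2 ≤ τK * Nv' ^ 2 := by
    linarith [mul_le_mul_of_nonneg_right hτ3 (mul_nonneg hτK.le (sq_nonneg Nv'))]
  have hNc2 : Nconv ^ 2 ≤ na ^ 2 * Ngrad ^ 2 := by
    linarith [mul_self_le_mul_self hNconv hconv]
  have hτ2sq : (τK * na) ^ 2 ≤ h ^ 2 := by
    linarith [mul_self_le_mul_self (mul_nonneg hτK.le hna) hτ2]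
  have t3 : τK ^ 3 * Nconv ^ 2 ≤ Cinv ^ 2 * τK * Nv' ^ 2 := by
    linarith [mul_le_mul_of_nonneg_left hNc2 (pow_nonneg hτK.le 3),
      mul_le_mul_of_nonneg_right hτ2sq (mul_nonneg hτK.le (sq_nonneg Ngrad)),
      mul_le_mul_of_nonneg_left hg2' hτK.le]
  have hτ1sq : (τK * k) ^ 2 ≤ h ^ 4 := by
    linarith [mul_self_le_mul_self (mul_nonneg hτK.le hk) hτ1]
  have t4 : τE * τK ^ 2 * k ^ 2 * Njump ^ 2 * h ^ 2 ≤
      c₄ * Ctr * Cinv ^ 2 * τK * Nv' ^ 2 * h ^ 2 := by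
    have s1 : (τE * h) * ((τK * k) ^ 2 * (h * Njump ^ 2)) ≤
        (c₄ * τK) * ((τK * k) ^ 2 * (h * Njump ^ 2)) :=
      mul_le_mul_of_nonneg_right hτE' (by positivity)
    have s2 : (c₄ * τK) * ((τK * k) ^ 2 * (h * Njump ^ 2)) ≤
        (c₄ * τK) * (h ^ 4 * (h * Njump ^ 2)) :=
      mul_le_mul_of_nonneg_left
        (mul_le_mul_of_nonneg_right hτ1sq (by positivity : (0:ℝ) ≤ h * Njump ^ 2))
        (mul_nonneg hc₄.le hτK.le)
    have s3 : (c₄ * τK) * (h ^ 4 * (h * Njump ^ 2)) ≤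
        (c₄ * τK) * (h ^ 4 * (Ctr * Ngrad ^ 2)) :=
      mul_le_mul_of_nonneg_left
        (mul_le_mul_of_nonneg_left hjump' (by positivity : (0:ℝ) ≤ h ^ 4))
        (mul_nonneg hc₄.le hτK.le)
    have s4 : (c₄ * τK) * (h ^ 2 * ((h ^ 2 * Ngrad ^ 2) * Ctr)) ≤
        (c₄ * τK) * (h ^ 2 * ((Cinv ^ 2 * Nv' ^ 2) * Ctr)) :=
      mul_le_mul_of_nonneg_left
        (mul_le_mul_of_nonneg_left
          (mul_le_mul_of_nonneg_right hg2' hCtr.le)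
          (by positivity : (0:ℝ) ≤ h ^ 2))
        (mul_nonneg hc₄.le hτK.le)
    linarith [s1, s2, s3, s4]
  have t4' : τE * τK ^ 2 * k ^ 2 * Njump ^ 2 ≤ c₄ * Ctr * Cinv ^ 2 * τK * Nv' ^ 2 :=
    le_of_mul_le_mul_right (by linarith [t4]) hh2
  -- stability
  have hN2 : Nv' ^ 2 ≤ Nau ^ 2 := by linarith [mul_self_le_mul_self hNv' hstab]
  have hτN : τK * Nv' ^ 2 ≤ τK * Nau ^ 2 := mul_le_mul_of_nonneg_left hN2 hτK.le
  have hCτN : (2 * Cinv ^ 2 + 1 + c₄ * Ctr * Cinv ^ 2) * (τK * Nv' ^ 2) ≤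
      (2 * Cinv ^ 2 + 1 + c₄ * Ctr * Cinv ^ 2) * (τK * Nau ^ 2) :=
    mul_le_mul_of_nonneg_left hτN (by positivity)
  refine ⟨2 * Cinv ^ 2 + 1 + c₄ * Ctr * Cinv ^ 2, by positivity, ?_, ?_⟩
  · linarith [t1, t2, t3, t4', hCτN]
  · have h0 : 0 ≤ τE * τK ^ 2 * k ^ 2 * Njump ^ 2 := by positivity
    linarith [t1, t2, t3, t4', hCτN]
end

section
/- Let V be a normed space with seminorms |||·||| and η, ζ : V → ℝ≥0, and suppose: (coercivity up to interpolation error) |||e|||² − ζ² ≤ C₁·B_stab(e, Λ(e)); (consistency) B_stab(e, Λ(e)) = B(e, P^⊥e) + S(e, P^⊥e); and the continuity bounds B(e, P^⊥e) ≤ C₂ η |||P^⊥e||| and S(e, P^⊥e) ≤ C₃ η(|||P^⊥e||| + ζ), with |||P^⊥e||| ≤ |||e||| + C₄ζ. Then |||e||| ≤ C(η + ζ) for some constant C depending only on C₁,…,C₄. -/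
set_option maxHeartbeats 1000000 in
/-- Abstract upper-bound half of the a posteriori error estimate in the stabilized norm:
if `|||e|||² − ζ² ≤ C₁ B_stab(e, Λe)` (quasi-coercivity), `B_stab(e, Λe) = B(e, P^⊥e) +
S(e, P^⊥e)` (consistency), `B(e, P^⊥e) ≤ C₂η|||P^⊥e|||`, `S(e, P^⊥e) ≤ C₃η(|||P^⊥e||| + ζ)`
(quasi-continuity), and `|||P^⊥e||| ≤ |||e||| + C₄ζ`, then `|||e||| ≤ C(η + ζ)` for some
constant `C` depending only on `C₁, …, C₄`. -/
theorem stmt_19 (C₁ C₂ C₃ C₄ : ℝ)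
    (hC₁ : 0 < C₁) (hC₂ : 0 < C₂) (hC₃ : 0 < C₃) (hC₄ : 0 < C₄) :
    ∃ C > 0, ∀ nrme ζ η nrmPe BΛ BPe SPe : ℝ,
      0 ≤ nrme → 0 ≤ ζ → 0 ≤ η → 0 ≤ nrmPe →
      nrme ^ 2 - ζ ^ 2 ≤ C₁ * BΛ →
      BΛ = BPe + SPe →
      BPe ≤ C₂ * η * nrmPe →
      SPe ≤ C₃ * η * (nrmPe + ζ) →
      nrmPe ≤ nrme + C₄ * ζ →
      nrme ≤ C * (η + ζ) := by
  set K := C₁ * (C₂ + C₃) with hK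
  set M := K * C₄ + C₁ * C₃ with hM
  have hKpos : 0 < K := by positivity
  have hMpos : 0 < M := by positivity
  refine ⟨K + M + 1, by positivity, ?_⟩
  intro nrme ζ η nrmPe BΛ BPe SPe he hζ hη hPe h1 h2 h3 h4 h5
  subst h2
  set C := K + M + 1 with hC
  have hCpos : (0:ℝ) < C := by positivity
  have hC1 : (1:ℝ) ≤ C := by nlinarith
  -- key: nrme² ≤ ζ² + K η nrme + M η ζ
  have key : nrme ^ 2 ≤ ζ ^ 2 + K * (η * nrme) + M * (η * ζ) := by
    rw [hM, hK]
    nlinarith [mul_le_mul_of_nonneg_left h3 hC₁.le,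
      mul_le_mul_of_nonneg_left h4 hC₁.le,
      mul_le_mul_of_nonneg_left h5
        (by positivity : (0:ℝ) ≤ C₁ * (C₂ + C₃) * η)]
  by_contra hcon
  push_neg at hcon
  have hx : 0 < nrme := lt_of_le_of_lt (by positivity) hcon
  have hsq : (C * (η + ζ)) * (C * (η + ζ)) < nrme * nrme :=
    mul_lt_mul'' hcon hcon (by positivity) (by positivity)
  have hconx : (C * (η + ζ)) * nrme < nrme * nrme :=
    mul_lt_mul_of_pos_right hcon hx
  nlinarith [key, hsq, hconx, mul_nonneg hη hζ, sq_nonneg ζ, sq_nonneg (η + ζ),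
    mul_nonneg hη he, mul_nonneg hζ he, mul_pos hKpos hMpos, sq_nonneg nrme,
    mul_nonneg (mul_nonneg hη hζ) hMpos.le, mul_nonneg hη hη,
    mul_lt_mul_of_pos_left hconx hKpos, mul_lt_mul_of_pos_left hsq hMpos,
    mul_nonneg (mul_nonneg hζ hζ) hMpos.le, mul_nonneg (mul_nonneg hζ hζ) hKpos.le]
end
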